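/- Let A be the m×m tridiagonal matrix described in the context. Then A is invertible and the entries of its inverse satisfy |（A⁻¹)_{ij}| ≤ (2/3)·2^{−|i−j|} for all 1 ≤ i, j ≤ m. -/

import Mathlib

/-- The `(m+1) × (m+1)` tridiagonal matrix with diagonal entries `2`,
superdiagonal entries `A i (i+1) = μ i` and subdiagonal entries
`A (i+1) i = λ (i+1)`. -/
noncomputable def splineMatrix (m : ℕ) (lam mu : Fin (m + 1) → ℝ) :
    Matrix (Fin (m + 1)) (Fin (m + 1)) ℝ := fun i j =>
  if (j : ℕ) = (i : ℕ) + 1 then mu i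
  else if (i : ℕ) = (j : ℕ) + 1 then lam i
  else if i = j then 2 else 0

 
namespace SplineAux

open scoped NNReal

attribute [local instance] Matrix.linftyOpNormedAddCommGroup Matrix.linftyOpNormedRing
  Matrix.linftyOpNormedAlgebra

variable {m : ℕ} (lam mu : Fin (m + 1) → ℝ)

noncomputable def B : Matrix (Fin (m + 1)) (Fin (m + 1)) ℝ :=
  1 - (2⁻¹ : ℝ) • splineMatrix m lam mu

lemma B_apply (i j : Fin (m + 1)) :
    B lam mu i j = if (j : ℕ) = (i : ℕ) + 1 then -(2⁻¹ * mu i)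
      else if (i : ℕ) = (j : ℕ) + 1 then -(2⁻¹ * lam i) else 0 := by
  have hij : i = j ↔ (i : ℕ) = (j : ℕ) := Fin.ext_iff
  simp only [B, Matrix.sub_apply, Matrix.smul_apply, Matrix.one_apply, splineMatrix, smul_eq_mul]
  rcases Nat.decEq (j : ℕ) ((i : ℕ) + 1) with h1 | h1
  · rw [if_neg h1, if_neg h1]
    rcases Nat.decEq (i : ℕ) ((j : ℕ) + 1) with h2 | h2
    · rw [if_neg h2, if_neg h2]
      by_cases h3 : i = j
      · rw [if_pos h3, if_pos h3]; norm_num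
      · rw [if_neg h3, if_neg h3]; norm_num
    · rw [if_pos h2, if_pos h2]
      have : ¬ i = j := by rw [hij]; omega
      rw [if_neg this]; ring
  · rw [if_pos h1, if_pos h1]
    have : ¬ i = j := by rw [hij]; omega
    rw [if_neg this]; ring

lemma B_ne_zero {i j : Fin (m + 1)} (h : B lam mu i j ≠ 0) :
    ((j : ℕ) = (i : ℕ) + 1 ∨ (i : ℕ) = (j : ℕ) + 1) := by
  rw [B_apply] at h
  split_ifs at h with h1 h2
  · exact Or.inl h1
  · exact Or.inr h2
  · exact absurd rfl h

lemma abs_B_apply (hlam : ∀ i, 0 ≤ lam i ∧ lam i ≤ 1) (hmu : ∀ i, 0 ≤ mu i ∧ mu i ≤ 1)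
    (i j : Fin (m + 1)) :
    |B lam mu i j| = 2⁻¹ * ((if (j : ℕ) = (i : ℕ) + 1 then mu i else 0)
      + (if (i : ℕ) = (j : ℕ) + 1 then lam i else 0)) := by
  rw [B_apply]
  rcases Nat.decEq (j : ℕ) ((i : ℕ) + 1) with h1 | h1
  · rw [if_neg h1, if_neg h1]
    rcases Nat.decEq (i : ℕ) ((j : ℕ) + 1) with h2 | h2
    · rw [if_neg h2, if_neg h2]; norm_num
    · rw [if_pos h2, if_pos h2]
      rw [abs_of_nonpos (by nlinarith [(hlam i).1])]; ring
  · rw [if_pos h1, if_pos h1]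
    have h2 : ¬ (i : ℕ) = (j : ℕ) + 1 := by omega
    rw [if_neg h2]
    rw [abs_of_nonpos (by nlinarith [(hmu i).1])]; ring

lemma row_sum_le (hlam : ∀ i, 0 ≤ lam i ∧ lam i ≤ 1) (hmu : ∀ i, 0 ≤ mu i ∧ mu i ≤ 1)
    (hsum : ∀ i, lam i + mu i = 1) (i : Fin (m + 1)) : ∑ l, |B lam mu i l| ≤ 2⁻¹ := by
  have h1 : ∀ l : Fin (m + 1), |B lam mu i l| =
      2⁻¹ * ((if (l : ℕ) = (i : ℕ) + 1 then mu i else 0)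
        + (if (i : ℕ) = (l : ℕ) + 1 then lam i else 0)) :=
    fun l => abs_B_apply lam mu hlam hmu i l
  simp_rw [h1, ← Finset.mul_sum, Finset.sum_add_distrib]
  have e1 : (∑ l : Fin (m + 1), if (l : ℕ) = (i : ℕ) + 1 then mu i else 0) ≤ mu i := by
    rw [Fin.sum_univ_eq_sum_range (fun x => if x = (i : ℕ) + 1 then mu i else 0)]
    rw [Finset.sum_ite_eq' (Finset.range (m + 1)) ((i : ℕ) + 1) (fun _ => mu i)]
    split_ifs
    · exact le_rfl
    · exact (hmu i).1
  have e2 : (∑ l : Fin (m + 1), if (i : ℕ) = (l : ℕ) + 1 then lam i else 0) ≤ lam i := by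
    have hb : ∀ l : Fin (m + 1), (if (i : ℕ) = (l : ℕ) + 1 then lam i else 0)
        ≤ (if (l : ℕ) = (i : ℕ) - 1 then lam i else 0) := by
      intro l
      split_ifs with p q q
      · exact le_rfl
      · omega
      · exact (hlam i).1
      · exact le_rfl
    calc (∑ l : Fin (m + 1), if (i : ℕ) = (l : ℕ) + 1 then lam i else 0)
        ≤ ∑ l : Fin (m + 1), (if (l : ℕ) = (i : ℕ) - 1 then lam i else 0) :=
          Finset.sum_le_sum fun l _ => hb l
      _ ≤ lam i := by
          rw [Fin.sum_univ_eq_sum_range (fun x => if x = (i : ℕ) - 1 then lam i else 0)]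
          rw [Finset.sum_ite_eq' (Finset.range (m + 1)) ((i : ℕ) - 1) (fun _ => lam i)]
          split_ifs
          · exact le_rfl
          · exact (hlam i).1
  have := add_le_add e1 e2
  calc 2⁻¹ * ((∑ l : Fin (m + 1), if (l : ℕ) = (i : ℕ) + 1 then mu i else 0)
        + ∑ l : Fin (m + 1), if (i : ℕ) = (l : ℕ) + 1 then lam i else 0)
      ≤ 2⁻¹ * (mu i + lam i) := by nlinarith
    _ = 2⁻¹ := by rw [add_comm, hsum i]; ring


lemma norm_B_le (hlam : ∀ i, 0 ≤ lam i ∧ lam i ≤ 1) (hmu : ∀ i, 0 ≤ mu i ∧ mu i ≤ 1)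
    (hsum : ∀ i, lam i + mu i = 1) : ‖B lam mu‖ ≤ 2⁻¹ := by
  rw [Matrix.linfty_opNorm_def]
  have h : (Finset.univ.sup fun i : Fin (m + 1) => ∑ j, ‖B lam mu i j‖₊) ≤ (2⁻¹ : ℝ≥0) := by
    apply Finset.sup_le
    intro i _
    rw [← NNReal.coe_le_coe]
    push_cast
    have := row_sum_le lam mu hlam hmu hsum i
    simpa [Real.norm_eq_abs] using this
  calc ((Finset.univ.sup fun i : Fin (m + 1) => ∑ j, ‖B lam mu i j‖₊ : ℝ≥0) : ℝ)
      ≤ ((2⁻¹ : ℝ≥0) : ℝ) := NNReal.coe_le_coe.mpr h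
    _ = 2⁻¹ := by norm_num

lemma pow_apply (hlam : ∀ i, 0 ≤ lam i ∧ lam i ≤ 1) (hmu : ∀ i, 0 ≤ mu i ∧ mu i ≤ 1)
    (hsum : ∀ i, lam i + mu i = 1) (k : ℕ) :
    ∀ i j : Fin (m + 1), |((B lam mu) ^ k) i j| ≤ (2⁻¹ : ℝ) ^ k ∧
      (¬((((i : ℤ) - (j : ℤ)).natAbs ≤ k ∧ (k + ((i : ℤ) - (j : ℤ)).natAbs) % 2 = 0)) →
        ((B lam mu) ^ k) i j = 0) := by
  induction k with
  | zero =>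
    intro i j
    constructor
    · by_cases hij : i = j <;> simp [Matrix.one_apply, hij]
    · intro h
      by_cases hij : i = j
      · exfalso; apply h; subst hij; simp
      · simp [Matrix.one_apply, hij]
  | succ k ih =>
    intro i j
    have hmul : ((B lam mu) ^ (k + 1)) i j = ∑ l, B lam mu i l * ((B lam mu) ^ k) l j := by
      rw [pow_succ', Matrix.mul_apply]
    constructor
    · rw [hmul]
      calc |∑ l, B lam mu i l * ((B lam mu) ^ k) l j|
          ≤ ∑ l, |B lam mu i l * ((B lam mu) ^ k) l j| := Finset.abs_sum_le_sum_abs _ _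
        _ ≤ ∑ l, |B lam mu i l| * (2⁻¹ : ℝ) ^ k := by
            apply Finset.sum_le_sum
            intro l _
            rw [abs_mul]
            exact mul_le_mul_of_nonneg_left (ih l j).1 (abs_nonneg _)
        _ = (∑ l, |B lam mu i l|) * (2⁻¹ : ℝ) ^ k := (Finset.sum_mul _ _ _).symm
        _ ≤ 2⁻¹ * (2⁻¹ : ℝ) ^ k := by
            apply mul_le_mul_of_nonneg_right (row_sum_le lam mu hlam hmu hsum i)
            positivity
        _ = (2⁻¹ : ℝ) ^ (k + 1) := by ring
    · intro h
      rw [hmul]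
      apply Finset.sum_eq_zero
      intro l _
      by_cases hB : B lam mu i l = 0
      · rw [hB, zero_mul]
      · have hadj := B_ne_zero lam mu hB
        have hadjZ : ((l : ℤ)) = (i : ℤ) + 1 ∨ (i : ℤ) = (l : ℤ) + 1 := by
          rcases hadj with h' | h'
          · left; exact_mod_cast congrArg (Nat.cast : ℕ → ℤ) h'
          · right; exact_mod_cast congrArg (Nat.cast : ℕ → ℤ) h'
        have hz : ((B lam mu) ^ k) l j = 0 := by
          apply (ih l j).2
          intro hc
          apply h
          omega
        rw [hz, mul_zero]


noncomputable def entryCLM (i j : Fin (m + 1)) :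
    Matrix (Fin (m + 1)) (Fin (m + 1)) ℝ →L[ℝ] ℝ :=
  LinearMap.mkContinuous
    { toFun := fun M => M i j
      map_add' := fun _ _ => rfl
      map_smul' := fun _ _ => rfl } 1
    (fun M => by
      rw [one_mul]
      have h1 : ‖M i j‖₊ ≤ ‖M‖₊ := by
        rw [Matrix.linfty_opNNNorm_def]
        calc ‖M i j‖₊ ≤ ∑ l, ‖M i l‖₊ :=
              Finset.single_le_sum (f := fun l => ‖M i l‖₊) (fun _ _ => zero_le)
                (Finset.mem_univ j)
          _ ≤ _ := Finset.le_sup (f := fun r => ∑ l, ‖M r l‖₊) (Finset.mem_univ i)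
      exact_mod_cast h1)

theorem main (hlam : ∀ i, 0 ≤ lam i ∧ lam i ≤ 1) (hmu : ∀ i, 0 ≤ mu i ∧ mu i ≤ 1)
    (hsum : ∀ i, lam i + mu i = 1) :
    IsUnit (splineMatrix m lam mu) ∧
    ∀ i j : Fin (m + 1),
      |(splineMatrix m lam mu)⁻¹ i j| ≤ 2 / 3 * (1 / 2 : ℝ) ^ (((i : ℤ) - (j : ℤ)).natAbs) := by
  classical
  set Bm : Matrix (Fin (m + 1)) (Fin (m + 1)) ℝ := B lam mu with hBm
  have hAB : splineMatrix m lam mu = (2 : ℝ) • ((1 : Matrix (Fin (m+1)) (Fin (m+1)) ℝ) - Bm) := by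
    rw [hBm]
    simp [B, smul_smul]
  have hnorm : ‖Bm‖ < 1 := lt_of_le_of_lt (norm_B_le lam mu hlam hmu hsum) (by norm_num)
  set U : (Matrix (Fin (m+1)) (Fin (m+1)) ℝ)ˣ := Units.oneSub Bm hnorm with hUdef
  have hUval : (U : Matrix (Fin (m+1)) (Fin (m+1)) ℝ) = 1 - Bm := rfl
  have hUinv : ((U⁻¹ : (Matrix (Fin (m+1)) (Fin (m+1)) ℝ)ˣ) : Matrix (Fin (m+1)) (Fin (m+1)) ℝ)
      = ∑' n : ℕ, Bm ^ n := rfl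
  have hright : splineMatrix m lam mu *
      ((2⁻¹ : ℝ) • ((U⁻¹ : (Matrix (Fin (m+1)) (Fin (m+1)) ℝ)ˣ) : Matrix (Fin (m+1)) (Fin (m+1)) ℝ)) = 1 := by
    rw [hAB, smul_mul_assoc, mul_smul_comm, smul_smul,
      show (2 : ℝ) * 2⁻¹ = 1 by norm_num, one_smul, ← hUval, U.mul_inv]
  have hleft : ((2⁻¹ : ℝ) • ((U⁻¹ : (Matrix (Fin (m+1)) (Fin (m+1)) ℝ)ˣ) : Matrix (Fin (m+1)) (Fin (m+1)) ℝ))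
      * splineMatrix m lam mu = 1 := by
    rw [hAB, smul_mul_assoc, mul_smul_comm, smul_smul,
      show (2⁻¹ : ℝ) * 2 = 1 by norm_num, one_smul, ← hUval, U.inv_mul]
  refine ⟨⟨⟨splineMatrix m lam mu, _, hright, hleft⟩, rfl⟩, ?_⟩
  have hinv : (splineMatrix m lam mu)⁻¹
      = (2⁻¹ : ℝ) • ((U⁻¹ : (Matrix (Fin (m+1)) (Fin (m+1)) ℝ)ˣ) : Matrix (Fin (m+1)) (Fin (m+1)) ℝ) :=
    Matrix.inv_eq_right_inv hright
  intro i j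
  set d : ℕ := ((i : ℤ) - (j : ℤ)).natAbs with hd
  have hgeom : Summable (fun n : ℕ => Bm ^ n) := summable_geometric_of_norm_lt_one hnorm
  have hE : HasSum (fun n : ℕ => (Bm ^ n) i j) ((∑' n : ℕ, Bm ^ n) i j) :=
    hgeom.hasSum.mapL (entryCLM i j)
  set f : ℕ → ℝ := fun n => (Bm ^ n) i j with hf
  have habs : ∀ n, |f n| ≤ (2⁻¹ : ℝ) ^ n := fun n => (pow_apply lam mu hlam hmu hsum n i j).1
  have hzero : ∀ n, ¬(d ≤ n ∧ (n + d) % 2 = 0) → f n = 0 :=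
    fun n hn => (pow_apply lam mu hlam hmu hsum n i j).2 hn
  have hsumabs : Summable (fun n => |f n|) :=
    Summable.of_nonneg_of_le (fun n => abs_nonneg _) habs
      (summable_geometric_of_lt_one (by norm_num) (by norm_num))
  have hinj : Function.Injective (fun t : ℕ => d + 2 * t) := fun a b hab => by
    simp only at hab; omega
  have hsupp : Function.support (fun n => |f n|) ⊆ Set.range (fun t : ℕ => d + 2 * t) := by
    intro n hn
    have hfn : f n ≠ 0 := fun h => hn (by simp [h])
    by_contra hr
    apply hfn
    apply hzero
    intro hc
    exact hr ⟨(n - d) / 2, by simp only; omega⟩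
  have heq1 : ∑' n, |f n| = ∑' t : ℕ, |f (d + 2 * t)| :=
    (Function.Injective.tsum_eq hinj hsupp).symm
  have hsum2 : Summable (fun t : ℕ => |f (d + 2 * t)|) := hsumabs.comp_injective hinj
  have hsum3 : Summable (fun t : ℕ => (2⁻¹ : ℝ) ^ d * (4⁻¹ : ℝ) ^ t) :=
    (summable_geometric_of_lt_one (by norm_num) (by norm_num)).mul_left _
  have hbound2 : ∑' t : ℕ, |f (d + 2 * t)| ≤ ∑' t : ℕ, (2⁻¹ : ℝ) ^ d * (4⁻¹ : ℝ) ^ t := by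
    apply Summable.tsum_le_tsum _ hsum2 hsum3
    intro t
    calc |f (d + 2 * t)| ≤ (2⁻¹ : ℝ) ^ (d + 2 * t) := habs _
      _ = (2⁻¹ : ℝ) ^ d * (4⁻¹ : ℝ) ^ t := by
          rw [pow_add, pow_mul]
          norm_num
  have hgeo : ∑' t : ℕ, (2⁻¹ : ℝ) ^ d * (4⁻¹ : ℝ) ^ t = (2⁻¹ : ℝ) ^ d * (4 / 3) := by
    rw [tsum_mul_left, tsum_geometric_of_lt_one (by norm_num) (by norm_num)]
    norm_num
  have htsum_le : |∑' n, f n| ≤ (2⁻¹ : ℝ) ^ d * (4 / 3) := by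
    calc |∑' n, f n| ≤ ∑' n, |f n| := by
          have := norm_tsum_le_tsum_norm (f := f) (by simpa [Real.norm_eq_abs] using hsumabs)
          simpa [Real.norm_eq_abs] using this
      _ = ∑' t : ℕ, |f (d + 2 * t)| := heq1
      _ ≤ ∑' t : ℕ, (2⁻¹ : ℝ) ^ d * (4⁻¹ : ℝ) ^ t := hbound2
      _ = (2⁻¹ : ℝ) ^ d * (4 / 3) := hgeo
  have hentry : (splineMatrix m lam mu)⁻¹ i j = 2⁻¹ * ∑' n, f n := by
    rw [hinv, Matrix.smul_apply, smul_eq_mul, hUinv, hE.tsum_eq]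
  rw [hentry, abs_mul]
  have h2 : |(2⁻¹ : ℝ)| = 2⁻¹ := by norm_num
  rw [h2]
  calc 2⁻¹ * |∑' n, f n| ≤ 2⁻¹ * ((2⁻¹ : ℝ) ^ d * (4 / 3)) := by nlinarith [htsum_le]
    _ = 2 / 3 * (1 / 2 : ℝ) ^ d := by ring

end SplineAux

/-- Kershaw's bound: the tridiagonal spline matrix is invertible and the
entries of its inverse decay geometrically away from the diagonal:
`|(A⁻¹)ᵢⱼ| ≤ (2/3)·2^{−|i−j|}`. -/
theorem splineMatrix_inv_entry_bound (m : ℕ) (lam mu : Fin (m + 1) → ℝ)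
    (hlam : ∀ i, 0 ≤ lam i ∧ lam i ≤ 1) (hmu : ∀ i, 0 ≤ mu i ∧ mu i ≤ 1)
    (hsum : ∀ i, lam i + mu i = 1) :
    IsUnit (splineMatrix m lam mu) ∧
    ∀ i j : Fin (m + 1),
      |(splineMatrix m lam mu)⁻¹ i j| ≤ 2 / 3 * (1 / 2 : ℝ) ^ (((i : ℤ) - (j : ℤ)).natAbs) := by
  exact SplineAux.main lam mu hlam hmu hsum
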